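/- Define D_0 = 1 and, for j ≥ 1, D_j = D_{j−1}^q·(t − t^{q^j})/((t − ζ^{q^{j−1}})^{q^j}·(t − ζ^q)) in 𝔽_{q²}(t). Then the formal power series exp(X) = Σ_{j≥0} D_j^{−1}·X^{q^j} over 𝔽_{q²}(t) satisfies Ψ_x(exp(X)) = exp(x·X) and Ψ_y(exp(X)) = exp(y·X) as formal power series identities, where Ψ_x(X) = T^{σ−1}X^{q²} + (T^σ + T^{(q−1)+σ})X^q + x·X and Ψ_y(X) = ζ·T^{σ−1}X^{q²} + (t·T^σ + ζ·T^{(q−1)+σ})X^q + y·X. -/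

import Mathlib

set_option maxHeartbeats 1000000

section AuxPow

private lemma coeff_pow_p {R : Type*} [CommRing R] (p : ℕ) [ExpChar R p] (hp : 1 < p)
    (f : PowerSeries R) (n : ℕ) :
    PowerSeries.coeff n (f ^ p) =
      if p ∣ n then (PowerSeries.coeff (n / p) f) ^ p else 0 := by
  classical
  set T : Polynomial R := f.trunc (n + 1) with hT
  have htr : ∀ m, m < n + 1 → PowerSeries.coeff m (f - (T : PowerSeries R)) = 0 := by
    intro m hm
    rw [map_sub, Polynomial.coeff_coe, PowerSeries.coeff_trunc, if_pos hm, sub_self]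
  obtain ⟨g, hg⟩ := PowerSeries.X_pow_dvd_iff.2 htr
  have hf : f = (T : PowerSeries R) + PowerSeries.X ^ (n + 1) * g := by
    rw [← hg]; ring
  have h2 : PowerSeries.coeff n ((PowerSeries.X : PowerSeries R) ^ ((n + 1) * p) * g ^ p) = 0 := by
    refine PowerSeries.X_pow_dvd_iff.1 (dvd_mul_right _ _) n ?_
    nlinarith
  haveI : ExpChar (PowerSeries R) p :=
    expChar_of_injective_ringHom (f := PowerSeries.C)
      (fun a b h => by simpa using congrArg (PowerSeries.constantCoeff) h) p
  have hpow : f ^ p = ((T ^ p : Polynomial R) : PowerSeries R) +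
      (PowerSeries.X : PowerSeries R) ^ ((n + 1) * p) * g ^ p := by
    rw [hf, add_pow_expChar, mul_pow, ← pow_mul, Polynomial.coe_pow]
  rw [hpow, map_add, h2, add_zero, Polynomial.coeff_coe,
    ← Polynomial.map_frobenius_expand (p := p) T, Polynomial.coeff_map,
    Polynomial.coeff_expand (by omega : 0 < p)]
  split_ifs with h
  · rw [frobenius_def]
    congr 1
    rw [hT, PowerSeries.coeff_trunc, if_pos (Nat.lt_succ_of_le (Nat.div_le_self n p))]
  · rw [map_zero]

private lemma coeff_pow_p_pow {R : Type*} [CommRing R] (p : ℕ) [ExpChar R p] (hp : 1 < p)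
    (k : ℕ) (f : PowerSeries R) (n : ℕ) :
    PowerSeries.coeff n (f ^ p ^ k) =
      if p ^ k ∣ n then (PowerSeries.coeff (n / p ^ k) f) ^ p ^ k else 0 := by
  induction k generalizing n with
  | zero => simp
  | succ k ih =>
    have hL : f ^ p ^ (k + 1) = (f ^ p ^ k) ^ p := by rw [pow_succ, pow_mul]
    rw [hL, coeff_pow_p p hp]
    by_cases h1 : p ∣ n
    · rw [if_pos h1, ih]
      by_cases h2 : p ^ k ∣ n / p
      · have h3 : p ^ (k + 1) ∣ n := by
          rw [pow_succ']
          exact (Nat.dvd_div_iff_mul_dvd h1).1 h2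
        rw [if_pos h2, if_pos h3, ← pow_mul, ← pow_succ, Nat.div_div_eq_div_mul, ← pow_succ']
      · have h3 : ¬ p ^ (k + 1) ∣ n := by
          intro hc
          exact h2 ((Nat.dvd_div_iff_mul_dvd h1).2 (by rwa [← pow_succ']))
        rw [if_neg h2, if_neg h3, zero_pow (by omega : p ≠ 0)]
    · have h3 : ¬ p ^ (k + 1) ∣ n := fun hc =>
        h1 (dvd_trans (dvd_pow_self p (Nat.succ_ne_zero k)) hc)
      rw [if_neg h1, if_neg h3]

end AuxPow

section AuxKey

private lemma key1x {K : Type*} [Field K] (T a b τ d1 w : K)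
    (h1 : T - a ≠ 0) (h2 : T - b ≠ 0) (h3 : τ - a ≠ 0) (h4 : τ - b ≠ 0) (h5 : T - τ ≠ 0)
    (hd1 : d1 = (T - τ) / ((τ - b) * (T - b))) (hw : w * (T - b) = τ - a) :
    ((T - a)⁻¹ + (w * (T - a))⁻¹) + ((T - a) * (T - b))⁻¹ * d1⁻¹
      = ((τ - a) * (τ - b))⁻¹ * d1⁻¹ := by
  have hwv : w = (τ - a) / (T - b) := by rw [eq_div_iff h2]; exact hw
  have hB : (w * (T - a))⁻¹ = (T - b) / ((τ - a) * (T - a)) := by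
    rw [hwv, div_mul_eq_mul_div, inv_div]
  have hD1 : d1⁻¹ = (τ - b) * (T - b) / (T - τ) := by rw [hd1, inv_div]
  rw [hB, hD1]
  have k2 : (τ - a) * (T - a) ≠ 0 := mul_ne_zero h3 h1
  have k5 : (T - a) * (T - b) ≠ 0 := mul_ne_zero h1 h2
  have k6 : (τ - a) * (τ - b) ≠ 0 := mul_ne_zero h3 h4
  field_simp
  ring

private lemma key1z {K : Type*} [Field K] (T b τ d1 : K)
    (h2 : T - b ≠ 0) (h4 : τ - b ≠ 0) (h5 : T - τ ≠ 0)
    (hd1 : d1 = (T - τ) / ((τ - b) * (T - b))) :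
    (1 : K) + (T - b)⁻¹ * d1⁻¹ = (τ - b)⁻¹ * d1⁻¹ := by
  have hD1 : d1⁻¹ = (τ - b) * (T - b) / (T - τ) := by rw [hd1, inv_div]
  rw [hD1]
  field_simp
  ring

private lemma key1y {K : Type*} [Field K] (T a b τ d1 w : K)
    (h1 : T - a ≠ 0) (h2 : T - b ≠ 0) (h3 : τ - a ≠ 0) (h4 : τ - b ≠ 0) (h5 : T - τ ≠ 0)
    (hd1 : d1 = (T - τ) / ((τ - b) * (T - b))) (hw : w * (T - b) = τ - a) :
    (T * (T - a)⁻¹ + a * (w * (T - a))⁻¹) + T * ((T - a) * (T - b))⁻¹ * d1⁻¹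
      = τ * ((τ - a) * (τ - b))⁻¹ * d1⁻¹ := by
  have hx := key1x T a b τ d1 w h1 h2 h3 h4 h5 hd1 hw
  have hz := key1z T b τ d1 h2 h4 h5 hd1
  have r1 : (T - a) * (T - a)⁻¹ = 1 := mul_inv_cancel₀ h1
  have r2 : (T - a) * ((T - a) * (T - b))⁻¹ = (T - b)⁻¹ := by
    rw [mul_inv, ← mul_assoc, mul_inv_cancel₀ h1, one_mul]
  have r3 : (τ - a) * ((τ - a) * (τ - b))⁻¹ = (τ - b)⁻¹ := by
    rw [mul_inv, ← mul_assoc, mul_inv_cancel₀ h3, one_mul]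
  linear_combination a * hx + hz + r1 + d1⁻¹ * r2 - d1⁻¹ * r3

private lemma key2x {K : Type*} [Field K] (T a b τ s G e1 e2 w : K)
    (h1 : T - a ≠ 0) (h2 : T - b ≠ 0) (h3 : s - a ≠ 0) (h4 : s - b ≠ 0)
    (h5 : τ - a ≠ 0) (h6 : τ - s ≠ 0) (h7 : T - s ≠ 0) (hG : G ≠ 0)
    (he1 : e1 = G * (τ - s) / ((s - a) * (τ - a)))
    (he2 : e2 = e1 * (T - s) / ((s - b) * (T - b)))
    (hw : w * (T - b) = τ - a) :
    (T - b) / (T - a) * G⁻¹ + ((T - a)⁻¹ + (w * (T - a))⁻¹) * e1⁻¹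
        + ((T - a) * (T - b))⁻¹ * e2⁻¹
      = ((s - a) * (s - b))⁻¹ * e2⁻¹ := by
  have hwv : w = (τ - a) / (T - b) := by rw [eq_div_iff h2]; exact hw
  have hB : (w * (T - a))⁻¹ = (T - b) / ((τ - a) * (T - a)) := by
    rw [hwv, div_mul_eq_mul_div, inv_div]
  have hE1 : e1⁻¹ = (s - a) * (τ - a) / (G * (τ - s)) := by rw [he1, inv_div]
  have hE2 : e2⁻¹ = (s - a) * (τ - a) * ((s - b) * (T - b)) / (G * (τ - s) * (T - s)) := by
    rw [he2, he1, div_mul_eq_mul_div, div_div, inv_div]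
  rw [hB, hE1, hE2]
  have k1 : (T - a) * G ≠ 0 := mul_ne_zero h1 hG
  have k2 : (τ - a) * (T - a) ≠ 0 := mul_ne_zero h5 h1
  have k3 : G * (τ - s) ≠ 0 := mul_ne_zero hG h6
  have k4 : G * (τ - s) * (T - s) ≠ 0 := mul_ne_zero k3 h7
  have k5 : (T - a) * (T - b) ≠ 0 := mul_ne_zero h1 h2
  have k6 : (s - a) * (s - b) ≠ 0 := mul_ne_zero h3 h4
  field_simp
  ring

private lemma key2z {K : Type*} [Field K] (T b s e1 e2 : K)
    (h2 : T - b ≠ 0) (h4 : s - b ≠ 0) (h7 : T - s ≠ 0) (he1 : e1 ≠ 0)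
    (he2 : e2 = e1 * (T - s) / ((s - b) * (T - b))) :
    e1⁻¹ + (T - b)⁻¹ * e2⁻¹ = (s - b)⁻¹ * e2⁻¹ := by
  have hE2 : e2⁻¹ = (s - b) * (T - b) / (e1 * (T - s)) := by rw [he2, inv_div]
  rw [hE2]
  have k1 : e1 * (T - s) ≠ 0 := mul_ne_zero he1 h7
  field_simp
  ring

private lemma key2y {K : Type*} [Field K] (T a b τ s G e1 e2 w : K)
    (h1 : T - a ≠ 0) (h2 : T - b ≠ 0) (h3 : s - a ≠ 0) (h4 : s - b ≠ 0)
    (h5 : τ - a ≠ 0) (h6 : τ - s ≠ 0) (h7 : T - s ≠ 0) (hG : G ≠ 0)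
    (he1 : e1 = G * (τ - s) / ((s - a) * (τ - a)))
    (he2 : e2 = e1 * (T - s) / ((s - b) * (T - b)))
    (hw : w * (T - b) = τ - a) :
    a * ((T - b) / (T - a)) * G⁻¹ + (T * (T - a)⁻¹ + a * (w * (T - a))⁻¹) * e1⁻¹
        + T * ((T - a) * (T - b))⁻¹ * e2⁻¹
      = s * ((s - a) * (s - b))⁻¹ * e2⁻¹ := by
  have he1ne : e1 ≠ 0 := by
    rw [he1]
    exact div_ne_zero (mul_ne_zero hG h6) (mul_ne_zero h3 h5)
  have hx := key2x T a b τ s G e1 e2 w h1 h2 h3 h4 h5 h6 h7 hG he1 he2 hw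
  have hz := key2z T b s e1 e2 h2 h4 h7 he1ne he2
  have r1 : (T - a) * (T - a)⁻¹ = 1 := mul_inv_cancel₀ h1
  have r2 : (T - a) * ((T - a) * (T - b))⁻¹ = (T - b)⁻¹ := by
    rw [mul_inv, ← mul_assoc, mul_inv_cancel₀ h1, one_mul]
  have r3 : (s - a) * ((s - a) * (s - b))⁻¹ = (s - b)⁻¹ := by
    rw [mul_inv, ← mul_assoc, mul_inv_cancel₀ h3, one_mul]
  linear_combination a * hx + hz + e1⁻¹ * r1 + e2⁻¹ * r2 - e2⁻¹ * r3

end AuxKey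

/-- Proposition 3.7 (exponential part): the power series
`exp(X) = Σ_j D_j⁻¹ X^{q^j}` satisfies `Ψ_x(exp(X)) = exp(xX)` and
`Ψ_y(exp(X)) = exp(yX)`. -/
theorem stmt8 {F : Type*} [Field F] [Fintype F]
    (q : ℕ) (hq : Fintype.card F = q ^ 2) (ζ : F) (hζ : ζ ^ q ≠ ζ)
    (Df : ℕ → RatFunc F) (hD0 : Df 0 = 1)
    (hD : ∀ j : ℕ, Df (j + 1) = Df j ^ q * (RatFunc.X - RatFunc.X ^ q ^ (j + 1)) /
      ((RatFunc.X - RatFunc.C (ζ ^ q ^ j)) ^ q ^ (j + 1) * (RatFunc.X - RatFunc.C ζ ^ q)))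
    (f : PowerSeries (RatFunc F))
    (hf1 : ∀ j : ℕ, PowerSeries.coeff (q ^ j) f = (Df j)⁻¹)
    (hf2 : ∀ n : ℕ, (∀ j : ℕ, q ^ j ≠ n) → PowerSeries.coeff n f = 0) :
    let t : RatFunc F := RatFunc.X
    let z : RatFunc F := RatFunc.C ζ
    let x : RatFunc F := ((t - z) * (t - z ^ q))⁻¹
    let y : RatFunc F := t * x
    PowerSeries.C ((t - z ^ q) / (t - z)) * f ^ q ^ 2 +
        PowerSeries.C ((t - z)⁻¹ + ((t - z ^ q) ^ (q - 1) * (t - z))⁻¹) * f ^ q +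
        PowerSeries.C x * f = PowerSeries.rescale x f ∧
      PowerSeries.C (z * ((t - z ^ q) / (t - z))) * f ^ q ^ 2 +
        PowerSeries.C (t * (t - z)⁻¹ + z * ((t - z ^ q) ^ (q - 1) * (t - z))⁻¹) *
          f ^ q +
        PowerSeries.C y * f = PowerSeries.rescale y f := by
  intro t z x y
  have hq2 : 2 ≤ q := by
    by_contra h
    push_neg at h
    interval_cases q
    · norm_num at hq
    · exact hζ (pow_one ζ)
  have qpos : 0 < q := by omega
  -- characteristic
  haveI := ringChar.charP F
  obtain ⟨nn, hpp, hcard⟩ := FiniteField.card F (ringChar F)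
  set p := ringChar F with hpdef
  have hq2p : q ^ 2 = p ^ (nn : ℕ) := by rw [← hq, hcard]
  have hqdvd : q ∣ p ^ (nn : ℕ) := ⟨q, by rw [← hq2p, pow_two]⟩
  obtain ⟨k, hkn, hqk⟩ := (Nat.dvd_prime_pow hpp).1 hqdvd
  haveI : Fact p.Prime := ⟨hpp⟩
  haveI : CharP (RatFunc F) p := charP_of_injective_ringHom (RatFunc.C (K := F)).injective p
  haveI : ExpChar (RatFunc F) p := ExpChar.prime hpp
  have hp1 : 1 < p := hpp.one_lt
  -- coefficients of powers of f
  have hfq : ∀ m : ℕ, PowerSeries.coeff m (f ^ q)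
      = if q ∣ m then (PowerSeries.coeff (m / q) f) ^ q else 0 := by
    intro m
    have h := coeff_pow_p_pow p hp1 k f m
    rwa [← hqk] at h
  have hfq2 : ∀ m : ℕ, PowerSeries.coeff m (f ^ q ^ 2)
      = if q ^ 2 ∣ m then (PowerSeries.coeff (m / q ^ 2) f) ^ q ^ 2 else 0 := by
    intro m
    have h := coeff_pow_p_pow p hp1 (k * 2) f m
    rwa [pow_mul, ← hqk] at h
  -- powers of ζ
  have hζcard : ζ ^ q ^ 2 = ζ := by rw [← hq]; exact FiniteField.pow_card ζ
  have hζeven : ∀ m : ℕ, ζ ^ q ^ (2 * m) = ζ := by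
    intro m
    induction m with
    | zero => simp
    | succ m ih =>
      have h : 2 * (m + 1) = 2 * m + 2 := by ring
      rw [h, pow_add, pow_mul, ih, hζcard]
  have hζodd : ∀ m : ℕ, ζ ^ q ^ (2 * m + 1) = ζ ^ q := by
    intro m
    rw [pow_succ, pow_mul, hζeven m]
  -- Frobenius in RatFunc F
  have hfrob : ∀ (m : ℕ) (u v : RatFunc F), (u - v) ^ q ^ m = u ^ q ^ m - v ^ q ^ m := by
    intro m u v
    rw [hqk, ← pow_mul]
    exact sub_pow_expChar_pow u v (k * m)
  have hfrob1 : ∀ u v : RatFunc F, (u - v) ^ q = u ^ q - v ^ q := by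
    intro u v
    have h := hfrob 1 u v
    rwa [pow_one] at h
  have hβq : ((RatFunc.C ζ : RatFunc F) ^ q) ^ q = RatFunc.C ζ := by
    rw [← pow_mul, ← pow_two, ← map_pow, hζcard]
  -- nonvanishing facts
  have hne1 : ∀ m : ℕ, 0 < m → ∀ c : F, (RatFunc.X : RatFunc F) ^ m - RatFunc.C c ≠ 0 := by
    intro m hm c
    have h : (RatFunc.X : RatFunc F) ^ m - RatFunc.C c
        = algebraMap (Polynomial F) (RatFunc F) (Polynomial.X ^ m - Polynomial.C c) := by
      rw [map_sub, map_pow, RatFunc.algebraMap_X, RatFunc.algebraMap_C]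
    rw [h]
    exact RatFunc.algebraMap_ne_zero (Polynomial.X_pow_sub_C_ne_zero hm c)
  have hneX : ∀ a b : ℕ, a ≠ b → (RatFunc.X : RatFunc F) ^ a - RatFunc.X ^ b ≠ 0 := by
    intro a b hab
    have h : (RatFunc.X : RatFunc F) ^ a - RatFunc.X ^ b
        = algebraMap (Polynomial F) (RatFunc F) (Polynomial.X ^ a - Polynomial.X ^ b) := by
      rw [map_sub, map_pow, map_pow, RatFunc.algebraMap_X]
    rw [h]
    refine RatFunc.algebraMap_ne_zero (sub_ne_zero_of_ne fun h' => hab ?_)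
    have h2 := congrArg Polynomial.natDegree h'
    simpa [Polynomial.natDegree_X_pow] using h2
  have hsa : ∀ m : ℕ, 0 < m → (RatFunc.X : RatFunc F) ^ m - RatFunc.C ζ ≠ 0 :=
    fun m hm => hne1 m hm ζ
  have hsb : ∀ m : ℕ, 0 < m → (RatFunc.X : RatFunc F) ^ m - RatFunc.C ζ ^ q ≠ 0 := by
    intro m hm
    rw [← map_pow]
    exact hne1 m hm _
  have hXa : (RatFunc.X : RatFunc F) - RatFunc.C ζ ≠ 0 := by
    have h := hsa 1 one_pos; rwa [pow_one] at h
  have hXb : (RatFunc.X : RatFunc F) - RatFunc.C ζ ^ q ≠ 0 := by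
    have h := hsb 1 one_pos; rwa [pow_one] at h
  have hXs : ∀ m : ℕ, 1 < m → (RatFunc.X : RatFunc F) - RatFunc.X ^ m ≠ 0 := by
    intro m hm
    have h := hneX 1 m (by omega)
    rwa [pow_one] at h
  -- restated recursion
  have hDstep : ∀ j : ℕ, Df (j + 1) = Df j ^ q * (RatFunc.X - RatFunc.X ^ q ^ (j + 1))
      / ((RatFunc.X ^ q ^ (j + 1) - RatFunc.C ζ ^ q) * (RatFunc.X - RatFunc.C ζ ^ q)) := by
    intro j
    rw [hD j]
    congr 2
    rw [hfrob (j + 1)]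
    congr 1
    rw [← map_pow, ← pow_mul, ← pow_add]
    have hj : j + (j + 1) = 2 * j + 1 := by ring
    rw [hj, hζodd j, map_pow]
  have hDne : ∀ j : ℕ, Df j ≠ 0 := by
    intro j
    induction j with
    | zero => rw [hD0]; exact one_ne_zero
    | succ j ih =>
      rw [hDstep j]
      refine div_ne_zero (mul_ne_zero (pow_ne_zero _ ih)
        (hXs _ (Nat.one_lt_pow (Nat.succ_ne_zero j) hq2)))
        (mul_ne_zero (hsb _ (pow_pos qpos _)) hXb)
  -- x to q-powers
  have hxpow : ∀ m : ℕ,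
      (((RatFunc.X - RatFunc.C ζ) * (RatFunc.X - RatFunc.C ζ ^ q) : RatFunc F))⁻¹ ^ q ^ m
      = ((RatFunc.X ^ q ^ m - RatFunc.C ζ) * (RatFunc.X ^ q ^ m - RatFunc.C ζ ^ q))⁻¹ := by
    intro m
    rw [inv_pow, mul_pow, hfrob m, hfrob m]
    congr 1
    have hc2 : (((RatFunc.C ζ : RatFunc F) ^ q) ^ q ^ m) = RatFunc.C (ζ ^ q ^ (m + 1)) := by
      rw [← pow_mul, ← map_pow, ← pow_succ']
    have hc1 : ((RatFunc.C ζ : RatFunc F) ^ q ^ m) = RatFunc.C (ζ ^ q ^ m) := (map_pow _ _ _).symm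
    rw [hc1, hc2]
    rcases Nat.even_or_odd m with hm | hm
    · obtain ⟨l, hl⟩ := hm
      have hm2 : m = 2 * l := by omega
      rw [hm2]
      have hodd : 2 * l + 1 = 2 * l + 1 := rfl
      rw [hζeven l, hζodd l, map_pow]
    · obtain ⟨l, hl⟩ := hm
      rw [hl]
      have he : 2 * l + 1 + 1 = 2 * (l + 1) := by ring
      rw [hζodd l, he, hζeven (l + 1), map_pow]
      ring
  -- the (q-1) power fact
  have hwfact : ((RatFunc.X : RatFunc F) - RatFunc.C ζ ^ q) ^ (q - 1)
      * (RatFunc.X - RatFunc.C ζ ^ q) = RatFunc.X ^ q - RatFunc.C ζ := by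
    rw [← pow_succ]
    have h : q - 1 + 1 = q := by omega
    rw [h, hfrob1, hβq]
  -- generic part
  have main : ∀ A B c : RatFunc F,
      (B * ((Df 0)⁻¹) ^ q + c * (Df 1)⁻¹ = c ^ q * (Df 1)⁻¹) →
      (∀ i : ℕ, A * ((Df i)⁻¹) ^ q ^ 2 + B * ((Df (i + 1))⁻¹) ^ q + c * (Df (i + 2))⁻¹
        = c ^ q ^ (i + 2) * (Df (i + 2))⁻¹) →
      PowerSeries.C A * f ^ q ^ 2 + PowerSeries.C B * f ^ q
        + PowerSeries.C c * f = PowerSeries.rescale c f := by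
    intro A B c H1 H2
    ext n
    simp only [map_add, PowerSeries.coeff_C_mul, PowerSeries.coeff_rescale]
    rw [hfq2, hfq]
    by_cases hn : ∃ j : ℕ, q ^ j = n
    · obtain ⟨j, rfl⟩ := hn
      rcases j with _ | j
      · -- j = 0
        rw [pow_zero]
        rw [if_neg (by rw [Nat.dvd_one]; nlinarith), if_neg (by rw [Nat.dvd_one]; omega)]
        have h0 := hf1 0
        rw [pow_zero] at h0
        rw [h0, hD0, inv_one, mul_zero, mul_zero, zero_add, zero_add, mul_one, pow_one, mul_one]
      rcases j with _ | i
      · -- j = 1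
        have hone : (0 : ℕ) + 1 = 1 := rfl
        rw [hone, pow_one]
        rw [if_neg (fun h => by have := Nat.le_of_dvd qpos h; nlinarith), if_pos (dvd_refl q)]
        rw [Nat.div_self qpos]
        have h0 := hf1 0
        rw [pow_zero] at h0
        have h1 := hf1 1
        rw [pow_one] at h1
        rw [h0, h1, mul_zero, zero_add]
        exact H1
      · -- j = i + 2
        have hii : i + 1 + 1 = i + 2 := rfl
        rw [hii]
        have c2 : q ^ 2 ∣ q ^ (i + 2) := pow_dvd_pow q (by omega)
        have c1 : q ∣ q ^ (i + 2) := dvd_pow_self q (by omega)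
        rw [if_pos c2, if_pos c1]
        have d2 : q ^ (i + 2) / q ^ 2 = q ^ i := by
          rw [Nat.pow_div (by omega) qpos]
          norm_num
        have d1 : q ^ (i + 2) / q = q ^ (i + 1) := by
          rw [pow_succ, Nat.mul_div_cancel _ qpos]
        rw [d2, d1, hf1 i, hf1 (i + 1), hf1 (i + 2)]
        exact H2 i
    · push_neg at hn
      rw [hf2 n hn]
      have hz2 : (if q ^ 2 ∣ n then (PowerSeries.coeff (n / q ^ 2) f) ^ q ^ 2 else 0)
          = 0 := by
        split_ifs with h
        · rw [hf2 (n / q ^ 2) (fun j hj => hn (j + 2)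
            (by rw [pow_add, hj, Nat.div_mul_cancel h]))]
          exact zero_pow (by positivity)
        · rfl
      have hz1 : (if q ∣ n then (PowerSeries.coeff (n / q) f) ^ q else 0) = 0 := by
        split_ifs with h
        · rw [hf2 (n / q) (fun j hj => hn (j + 1)
            (by rw [pow_succ, hj, Nat.div_mul_cancel h]))]
          exact zero_pow (by omega)
        · rfl
      rw [hz1, hz2]
      simp
  -- nonzero facts specialized
  have hD1f : Df 1 = (RatFunc.X - RatFunc.X ^ q)
      / ((RatFunc.X ^ q - RatFunc.C ζ ^ q) * (RatFunc.X - RatFunc.C ζ ^ q)) := by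
    have h := hDstep 0
    rw [hD0, one_pow, one_mul] at h
    simpa using h
  have hTτ : (RatFunc.X : RatFunc F) - RatFunc.X ^ q ≠ 0 := hXs q (by omega)
  -- the e1/e2 relations for j = i+2
  have he1 : ∀ i : ℕ, Df (i + 1) ^ q = Df i ^ q ^ 2
      * (RatFunc.X ^ q - RatFunc.X ^ q ^ (i + 2))
      / ((RatFunc.X ^ q ^ (i + 2) - RatFunc.C ζ) * (RatFunc.X ^ q - RatFunc.C ζ)) := by
    intro i
    have hDq : ((Df i ^ q) ^ q : RatFunc F) = Df i ^ q ^ 2 := by rw [← pow_mul, ← pow_two]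
    have hN : ((RatFunc.X : RatFunc F) - RatFunc.X ^ q ^ (i + 1)) ^ q
        = RatFunc.X ^ q - RatFunc.X ^ q ^ (i + 2) := by
      rw [hfrob1, ← pow_mul, ← pow_succ]
    have hM1 : ((RatFunc.X : RatFunc F) ^ q ^ (i + 1) - RatFunc.C ζ ^ q) ^ q
        = RatFunc.X ^ q ^ (i + 2) - RatFunc.C ζ := by
      rw [hfrob1, ← pow_mul, ← pow_succ, hβq]
    have hM2 : ((RatFunc.X : RatFunc F) - RatFunc.C ζ ^ q) ^ q
        = RatFunc.X ^ q - RatFunc.C ζ := by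
      rw [hfrob1, hβq]
    rw [hDstep i, div_pow, mul_pow, mul_pow, hDq, hN, hM1, hM2]
  have he2 : ∀ i : ℕ, Df (i + 2) = Df (i + 1) ^ q
      * (RatFunc.X - RatFunc.X ^ q ^ (i + 2))
      / ((RatFunc.X ^ q ^ (i + 2) - RatFunc.C ζ ^ q) * (RatFunc.X - RatFunc.C ζ ^ q)) := by
    intro i
    exact hDstep (i + 1)
  constructor
  · refine main _ _ _ ?_ ?_
    · -- H1, x-version
      simp only [show x = ((RatFunc.X - RatFunc.C ζ) * (RatFunc.X - RatFunc.C ζ ^ q)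
          : RatFunc F)⁻¹ from rfl,
        show t = (RatFunc.X : RatFunc F) from rfl, show z = (RatFunc.C ζ : RatFunc F) from rfl]
      rw [hD0, inv_one, one_pow, mul_one]
      have hxq := hxpow 1
      simp only [pow_one] at hxq
      rw [hxq]
      exact key1x RatFunc.X (RatFunc.C ζ) (RatFunc.C ζ ^ q) (RatFunc.X ^ q) (Df 1)
        ((RatFunc.X - RatFunc.C ζ ^ q) ^ (q - 1)) hXa hXb (hsa q qpos) (hsb q qpos) hTτ
        hD1f hwfact
    · -- H2, x-version
      intro i
      simp only [show x = ((RatFunc.X - RatFunc.C ζ) * (RatFunc.X - RatFunc.C ζ ^ q)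
          : RatFunc F)⁻¹ from rfl,
        show t = (RatFunc.X : RatFunc F) from rfl, show z = (RatFunc.C ζ : RatFunc F) from rfl]
      rw [inv_pow, inv_pow, hxpow (i + 2)]
      exact key2x RatFunc.X (RatFunc.C ζ) (RatFunc.C ζ ^ q) (RatFunc.X ^ q)
        (RatFunc.X ^ q ^ (i + 2)) (Df i ^ q ^ 2) (Df (i + 1) ^ q) (Df (i + 2))
        ((RatFunc.X - RatFunc.C ζ ^ q) ^ (q - 1)) hXa hXb
        (hsa _ (pow_pos qpos _)) (hsb _ (pow_pos qpos _)) (hsa q qpos)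
        (hneX q (q ^ (i + 2)) (by
          have h := Nat.pow_lt_pow_right (by omega : 1 < q) (by omega : 1 < i + 2)
          rw [pow_one] at h
          exact h.ne))
        (hXs _ (Nat.one_lt_pow (by omega) hq2)) (pow_ne_zero _ (hDne i))
        (he1 i) (he2 i) hwfact
  · refine main _ _ _ ?_ ?_
    · -- H1, y-version
      simp only [show y = RatFunc.X * ((RatFunc.X - RatFunc.C ζ)
          * (RatFunc.X - RatFunc.C ζ ^ q) : RatFunc F)⁻¹ from rfl,
        show t = (RatFunc.X : RatFunc F) from rfl, show z = (RatFunc.C ζ : RatFunc F) from rfl]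
      rw [hD0, inv_one, one_pow, mul_one]
      rw [mul_pow]
      have hxq := hxpow 1
      simp only [pow_one] at hxq
      rw [hxq]
      exact key1y RatFunc.X (RatFunc.C ζ) (RatFunc.C ζ ^ q) (RatFunc.X ^ q) (Df 1)
        ((RatFunc.X - RatFunc.C ζ ^ q) ^ (q - 1)) hXa hXb (hsa q qpos) (hsb q qpos) hTτ
        hD1f hwfact
    · -- H2, y-version
      intro i
      simp only [show y = RatFunc.X * ((RatFunc.X - RatFunc.C ζ)
          * (RatFunc.X - RatFunc.C ζ ^ q) : RatFunc F)⁻¹ from rfl,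
        show t = (RatFunc.X : RatFunc F) from rfl, show z = (RatFunc.C ζ : RatFunc F) from rfl]
      rw [inv_pow, inv_pow, mul_pow, hxpow (i + 2)]
      exact key2y RatFunc.X (RatFunc.C ζ) (RatFunc.C ζ ^ q) (RatFunc.X ^ q)
        (RatFunc.X ^ q ^ (i + 2)) (Df i ^ q ^ 2) (Df (i + 1) ^ q) (Df (i + 2))
        ((RatFunc.X - RatFunc.C ζ ^ q) ^ (q - 1)) hXa hXb
        (hsa _ (pow_pos qpos _)) (hsb _ (pow_pos qpos _)) (hsa q qpos)
        (hneX q (q ^ (i + 2)) (by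
          have h := Nat.pow_lt_pow_right (by omega : 1 < q) (by omega : 1 < i + 2)
          rw [pow_one] at h
          exact h.ne))
        (hXs _ (Nat.one_lt_pow (by omega) hq2)) (pow_ne_zero _ (hDne i))
        (he1 i) (he2 i) hwfact
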